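/- For independent Bernoulli variables X_j with Pr[X_j = 1] = x_j and weights s_j ∈ [0, κB] with Σ_j s_j x_j ≤ κB, where κ ∈ (0,1], we have Pr[Σ_j s_j X_j > B] ≤ (κ e^{1−κ})^{1/κ}. -/

import Mathlib

open MeasureTheory Finset

/-- Convexity of `exp`: secant bound on `[0, M]`. -/
lemma exp_secant_bound {a M : ℝ} (hM : 0 < M) (ha0 : 0 ≤ a) (haM : a ≤ M) :
    Real.exp a ≤ 1 + (a / M) * (Real.exp M - 1) := by
  have hθ0 : 0 ≤ a / M := div_nonneg ha0 hM.le
  have hθ1 : a / M ≤ 1 := (div_le_one hM).2 haM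
  have h := convexOn_exp.2 (Set.mem_univ (0:ℝ)) (Set.mem_univ M)
      (by linarith : (0:ℝ) ≤ 1 - a / M) hθ0 (by ring)
  have ha : (1 - a / M) • (0:ℝ) + (a / M) • M = a := by
    field_simp
    rw [smul_zero, zero_add, smul_eq_mul, div_mul_cancel₀ a hM.ne']
  rw [ha] at h
  simp only [smul_eq_mul, Real.exp_zero, mul_one] at h
  linarith

/-- Chernoff upper-tail bound: for independent Bernoulli indicators `X j` with
success probabilities `x j`, weights `s j ∈ [0, κB]` and expected total weight
`∑ j, s j * x j ≤ κB` with `κ ∈ (0,1]`, the probability that the total weight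
exceeds `B` is at most `(κ e^{1−κ})^{1/κ}`. -/
theorem chernoff_upper_tail_budget
    {Ω : Type*} [MeasurableSpace Ω] (P : Measure Ω) [IsProbabilityMeasure P]
    {J : Type*} [Fintype J]
    (X : J → Ω → ℝ)
    (hmeas : ∀ j, Measurable (X j))
    (hBernoulli : ∀ j ω, X j ω = 0 ∨ X j ω = 1)
    (hindep : ProbabilityTheory.iIndepFun X P)
    (x : J → ℝ) (hx01 : ∀ j, x j ∈ Set.Icc (0:ℝ) 1)
    (hprob : ∀ j, P {ω | X j ω = 1} = ENNReal.ofReal (x j))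
    (κ B : ℝ) (hκ : κ ∈ Set.Ioc (0:ℝ) 1) (hB : 0 < B)
    (s : J → ℝ) (hs : ∀ j, s j ∈ Set.Icc (0:ℝ) (κ * B))
    (hbudget : ∑ j, s j * x j ≤ κ * B) :
    (P {ω | B < ∑ j, s j * X j ω}).toReal ≤ (κ * Real.exp (1 - κ)) ^ (1 / κ) := by
  obtain ⟨hκ0, hκ1⟩ := hκ
  have hκB : 0 < κ * B := mul_pos hκ0 hB
  set t : ℝ := Real.log (1/κ) / (κ * B) with ht_def
  have hlog : 0 ≤ Real.log (1/κ) := Real.log_nonneg (by rw [le_div_iff₀ hκ0]; linarith)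
  have ht : 0 ≤ t := div_nonneg hlog hκB.le
  have htκB : t * (κ * B) = Real.log (1/κ) := div_mul_cancel₀ _ hκB.ne'
  have hexptκB : Real.exp (t * (κ * B)) = 1/κ := by
    rw [htκB, Real.exp_log (by positivity)]
  -- the scaled indicators
  set Y : J → Ω → ℝ := fun j ω => s j * X j ω with hY_def
  have hYmeas : ∀ j, Measurable (Y j) := fun j => (hmeas j).const_mul _
  have hYindep : ProbabilityTheory.iIndepFun Y P := by
    have := hindep.comp (fun j (a : ℝ) => s j * a) (fun j => measurable_const_mul _)
    exact this
  -- pointwise identity for exp(t * Y j)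
  have hptwise : ∀ j ω, Real.exp (t * Y j ω)
      = 1 + (Real.exp (t * s j) - 1) * X j ω := by
    intro j ω
    rcases hBernoulli j ω with h | h <;> simp [hY_def, h, mul_assoc]
  -- integral of X j is x j
  have hXint : ∀ j, Integrable (X j) P := by
    intro j
    refine (integrable_const (1:ℝ)).mono' (hmeas j).aestronglyMeasurable ?_
    filter_upwards with ω
    rcases hBernoulli j ω with h | h <;> simp [h]
  have hEX : ∀ j, ∫ ω, X j ω ∂P = x j := by
    intro j
    have hA : MeasurableSet {ω | X j ω = 1} := (hmeas j) (measurableSet_singleton 1)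
    have hind : ∀ ω, X j ω = Set.indicator {ω | X j ω = 1} (fun _ => (1:ℝ)) ω := by
      intro ω
      rcases hBernoulli j ω with h | h
      · simp [Set.indicator, h, Set.mem_setOf_eq]
      · simp [Set.indicator, h, Set.mem_setOf_eq]
    calc ∫ ω, X j ω ∂P = ∫ ω, Set.indicator {ω | X j ω = 1} (fun _ => (1:ℝ)) ω ∂P := by
          exact integral_congr_ae (Filter.Eventually.of_forall hind)
      _ = (P {ω | X j ω = 1}).toReal • (1:ℝ) := integral_indicator_const _ hA
      _ = x j := by rw [hprob j, smul_eq_mul, mul_one,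
          ENNReal.toReal_ofReal (hx01 j).1]
  -- mgf of each Y j
  have hmgf : ∀ j, ProbabilityTheory.mgf (Y j) P t
      = 1 + (Real.exp (t * s j) - 1) * x j := by
    intro j
    unfold ProbabilityTheory.mgf
    rw [integral_congr_ae (Filter.Eventually.of_forall (hptwise j))]
    rw [integral_add (integrable_const 1) ((hXint j).const_mul _)]
    simp [MeasureTheory.integral_const_mul, hEX j]
  -- integrability of exp(t * Y j)
  have hYint : ∀ j, Integrable (fun ω => Real.exp (t * Y j ω)) P := by
    intro j
    refine (integrable_const (1 + (Real.exp (t * s j) - 1))).mono'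
      (((hYmeas j).const_mul t).exp.aestronglyMeasurable) ?_
    filter_upwards with ω
    rw [hptwise j ω]
    have hc : 0 ≤ Real.exp (t * s j) - 1 := by
      have : (0:ℝ) ≤ t * s j := mul_nonneg ht (hs j).1
      nlinarith [Real.one_le_exp this]
    rcases hBernoulli j ω with h | h <;>
      · rw [h]
        rw [Real.norm_eq_abs, abs_of_nonneg (by nlinarith)]
        nlinarith
  -- the sum as a function
  have hSmeas : Measurable (fun ω => ∑ j, s j * X j ω) := by
    exact Finset.measurable_sum _ (fun j _ => (hmeas j).const_mul _)
  have hSsum : (fun ω => ∑ j, s j * X j ω) = ∑ j, Y j := by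
    funext ω; simp [hY_def, Finset.sum_apply]
  have hSint : Integrable (fun ω => Real.exp (t * ∑ j, s j * X j ω)) P := by
    refine (integrable_const (Real.exp (t * ∑ j, s j))).mono'
      ((hSmeas.const_mul t).exp.aestronglyMeasurable) ?_
    filter_upwards with ω
    rw [Real.norm_eq_abs, abs_of_nonneg (Real.exp_nonneg _), Real.exp_le_exp]
    refine mul_le_mul_of_nonneg_left (Finset.sum_le_sum fun j _ => ?_) ht
    rcases hBernoulli j ω with h | h <;> simp [h, (hs j).1]
  -- Chernoff
  have hchern := ProbabilityTheory.measure_ge_le_exp_mul_mgf (X := fun ω => ∑ j, s j * X j ω)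
    (μ := P) B ht hSint
  have hmono : (P {ω | B < ∑ j, s j * X j ω}).toReal
      ≤ (P {ω | B ≤ ∑ j, s j * X j ω}).toReal := by
    apply ENNReal.toReal_mono (measure_ne_top _ _)
    exact measure_mono (Set.setOf_subset_setOf.2 fun ω h => le_of_lt h)
  -- mgf of the sum
  have hmgfS : ProbabilityTheory.mgf (fun ω => ∑ j, s j * X j ω) P t
      = ∏ j, (1 + (Real.exp (t * s j) - 1) * x j) := by
    rw [hSsum, hYindep.mgf_sum hYmeas]
    exact Finset.prod_congr rfl fun j _ => hmgf j
  -- bound the product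
  have hprod_le : ∏ j, (1 + (Real.exp (t * s j) - 1) * x j)
      ≤ Real.exp (∑ j, (Real.exp (t * s j) - 1) * x j) := by
    rw [Real.exp_sum]
    refine Finset.prod_le_prod (fun j _ => ?_) (fun j _ => Real.add_one_le_exp _ |>.trans_eq' (by ring))
    have hc : 0 ≤ Real.exp (t * s j) - 1 := by
      have : (0:ℝ) ≤ t * s j := mul_nonneg ht (hs j).1
      nlinarith [Real.one_le_exp this]
    nlinarith [(hx01 j).1]
  -- bound the exponent sum
  have hsum_le : ∑ j, (Real.exp (t * s j) - 1) * x j ≤ 1/κ - 1 := by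
    have hstep : ∀ j, (Real.exp (t * s j) - 1) * x j
        ≤ (1/κ - 1) / (κ * B) * (s j * x j) := by
      intro j
      have h1 : Real.exp (t * s j) ≤ 1 + (t * s j / (t * (κ * B))) * (Real.exp (t * (κ * B)) - 1) := by
        rcases eq_or_lt_of_le ht with h0 | htpos
        · simp [← h0]
        · exact exp_secant_bound (mul_pos htpos hκB)
            (mul_nonneg ht (hs j).1) (mul_le_mul_of_nonneg_left (hs j).2 ht)
      have h1κ : (1:ℝ) ≤ 1/κ := by rw [le_div_iff₀ hκ0]; linarith
      rcases eq_or_lt_of_le ht with h0 | htpos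
      · rw [← h0]
        simp only [zero_mul, Real.exp_zero, sub_self]
        have := mul_nonneg (div_nonneg (by linarith : (0:ℝ) ≤ 1/κ - 1) hκB.le)
          (mul_nonneg (hs j).1 (hx01 j).1)
        linarith
      · rw [hexptκB] at h1
        have h2 : t * s j / (t * (κ * B)) = s j / (κ * B) := by
          rw [mul_div_mul_left _ _ htpos.ne']
        rw [h2] at h1
        have h3 : Real.exp (t * s j) - 1 ≤ s j / (κ * B) * (1/κ - 1) := by linarith
        have h4 : (Real.exp (t * s j) - 1) * x j ≤ s j / (κ * B) * (1/κ - 1) * x j := by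
          exact mul_le_mul_of_nonneg_right h3 (hx01 j).1
        calc (Real.exp (t * s j) - 1) * x j ≤ s j / (κ * B) * (1/κ - 1) * x j := h4
          _ = (1/κ - 1) / (κ * B) * (s j * x j) := by ring
    calc ∑ j, (Real.exp (t * s j) - 1) * x j
        ≤ ∑ j, (1/κ - 1) / (κ * B) * (s j * x j) := Finset.sum_le_sum fun j _ => hstep j
      _ = (1/κ - 1) / (κ * B) * ∑ j, s j * x j := by rw [Finset.mul_sum]
      _ ≤ (1/κ - 1) / (κ * B) * (κ * B) := by
          refine mul_le_mul_of_nonneg_left hbudget ?_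
          have : (1:ℝ) ≤ 1/κ := by rw [le_div_iff₀ hκ0]; linarith
          exact div_nonneg (by linarith) hκB.le
      _ = 1/κ - 1 := div_mul_cancel₀ _ hκB.ne'
  -- put everything together
  have hfinal : Real.exp (-t * B) * Real.exp (1/κ - 1)
      = (κ * Real.exp (1 - κ)) ^ (1 / κ) := by
    rw [← Real.exp_add, Real.rpow_def_of_pos (by positivity),
      Real.log_mul hκ0.ne' (Real.exp_ne_zero _), Real.log_exp]
    congr 1
    have htB : t * B = Real.log (1/κ) / κ := by
      rw [ht_def]; field_simp
    rw [neg_mul, htB, Real.log_div one_ne_zero hκ0.ne', Real.log_one]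
    field_simp
    ring
  calc (P {ω | B < ∑ j, s j * X j ω}).toReal
      ≤ (P {ω | B ≤ ∑ j, s j * X j ω}).toReal := hmono
    _ ≤ Real.exp (-t * B) * ProbabilityTheory.mgf (fun ω => ∑ j, s j * X j ω) P t := hchern
    _ ≤ Real.exp (-t * B) * Real.exp (1/κ - 1) := by
        refine mul_le_mul_of_nonneg_left ?_ (Real.exp_nonneg _)
        rw [hmgfS]
        exact hprod_le.trans (Real.exp_le_exp.2 hsum_le)
    _ = (κ * Real.exp (1 - κ)) ^ (1 / κ) := hfinal
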